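/- Let 0 ≤ k < d and let K ⊆ [0,1]^d intersect every k-dimensional affine subspace of ℝ^d that meets [0,1]^d. Then every (d−k−1)-dimensional face of the cube [0,1]^d is contained in K, provided K is closed. In particular, for each point z of the face {(z_1,…,z_{d-k-1},0,…,0) : z_i ∈ [0,1]}, there is a k-dimensional affine subspace V with V ∩ [0,1]^d = {z}, namely V = {x ∈ ℝ^d : x_i = z_i for 1 ≤ i ≤ d−k−1, and x_{d-k} + ⋯ + x_d = 0}. -/

import Mathlib

open Set Module

/-- The unit cube `[0,1]^d`. -/
def unitCube (d : ℕ) : Set (EuclideanSpace ℝ (Fin d)) :=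
  {x | ∀ i, x i ∈ Set.Icc (0 : ℝ) 1}

/-- If a closed `K ⊆ [0,1]^d` intersects every `k`-dimensional affine subspace
meeting `[0,1]^d`, then every `(d-k-1)`-dimensional face of `[0,1]^d` is contained
in `K`; and for each point `z` of the distinguished face (last `k+1` coordinates
zero), the affine subspace `V = {x : xᵢ = zᵢ for i < d-k-1, ∑_{i ≥ d-k-1} xᵢ = 0}`
meets `[0,1]^d` exactly in `{z}`. -/
theorem faces_subset_of_hits (d k : ℕ) (hk : k < d)
    (K : Set (EuclideanSpace ℝ (Fin d))) (hcl : IsClosed K) (hsub : K ⊆ unitCube d)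
    (hhit : ∀ V : AffineSubspace ℝ (EuclideanSpace ℝ (Fin d)), V ≠ ⊥ →
      finrank ℝ V.direction = k →
      ((V : Set _) ∩ unitCube d).Nonempty → (K ∩ (V : Set _)).Nonempty) :
    (∀ (F : Finset (Fin d)) (ε : Fin d → ℝ), F.card = k + 1 →
      (∀ i ∈ F, ε i = 0 ∨ ε i = 1) →
      {x : EuclideanSpace ℝ (Fin d) | x ∈ unitCube d ∧ ∀ i ∈ F, x i = ε i} ⊆ K) ∧
    (∀ z : EuclideanSpace ℝ (Fin d), z ∈ unitCube d →
      (∀ i : Fin d, d - k - 1 ≤ (i : ℕ) → z i = 0) →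
      {x : EuclideanSpace ℝ (Fin d) |
          (∀ i : Fin d, (i : ℕ) < d - k - 1 → x i = z i) ∧
          ∑ i ∈ Finset.univ.filter (fun i : Fin d => d - k - 1 ≤ (i : ℕ)), x i = 0} ∩
        unitCube d = {z}) := by
  constructor
  · intro F ε hF hε z hz
    obtain ⟨hzc, hzF⟩ := hz
    set σ : Fin d → ℝ := fun i => if ε i = 0 then 1 else -1 with hσdef
    have hσsq : ∀ i, σ i * σ i = 1 := by
      intro i; by_cases h : ε i = 0 <;> simp [hσdef, h]
    obtain ⟨i0, hi0⟩ : F.Nonempty := Finset.card_pos.mp (by omega)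
    let φ : EuclideanSpace ℝ (Fin d) →ₗ[ℝ] ((↥(Fᶜ) → ℝ) × ℝ) :=
      { toFun := fun v => (fun j => v j.1, ∑ i ∈ F, σ i * v i)
        map_add' := by
          intro v w
          simp [Prod.ext_iff, funext_iff, mul_add, Finset.sum_add_distrib]
        map_smul' := by
          intro c v
          simp [Prod.ext_iff, funext_iff, Finset.mul_sum]
          ring_nf
          simp [mul_comm, mul_assoc, mul_left_comm] }
    have hφ : ∀ v : EuclideanSpace ℝ (Fin d),
        φ v = (fun j : ↥(Fᶜ) => v j.1, ∑ i ∈ F, σ i * v i) := fun _ => rfl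
    have hφsurj : Function.Surjective φ := by
      rintro ⟨y, t⟩
      refine ⟨WithLp.toLp 2 (fun j => if hj : j ∈ F then (if j = i0 then σ i0 * t else 0)
        else y ⟨j, Finset.mem_compl.mpr hj⟩), ?_⟩
      rw [hφ]
      simp only [Prod.mk.injEq]
      constructor
      · funext j
        have hj : (j : Fin d) ∉ F := Finset.mem_compl.mp j.2
        simp [hj]
      · rw [Finset.sum_eq_single_of_mem i0 hi0]
        · simp [hi0, ← mul_assoc, hσsq]
        · intro i hi hne
          simp [hi, hne]
    have hker : finrank ℝ (LinearMap.ker φ) = k := by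
      have h1 := LinearMap.finrank_range_add_finrank_ker φ
      rw [LinearMap.range_eq_top.mpr hφsurj, finrank_top] at h1
      have h2 : finrank ℝ ((↥(Fᶜ) → ℝ) × ℝ) = Fᶜ.card + 1 := by
        simp [Module.finrank_prod, Finset.card_compl]
      have h3 : finrank ℝ (EuclideanSpace ℝ (Fin d)) = d := finrank_euclideanSpace_fin
      have h4 : Fᶜ.card = d - (k + 1) := by
        rw [Finset.card_compl, hF, Fintype.card_fin]
      rw [h2, h3, h4] at h1
      omega
    set V := AffineSubspace.mk' z (LinearMap.ker φ) with hV
    have hzV : z ∈ V := AffineSubspace.self_mem_mk' _ _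
    have hVne : V ≠ ⊥ := by
      rw [← AffineSubspace.nonempty_iff_ne_bot]
      exact ⟨z, hzV⟩
    have hVdir : finrank ℝ V.direction = k := by
      rw [hV, AffineSubspace.direction_mk']; exact hker
    obtain ⟨y, hyK, hyV⟩ := hhit V hVne hVdir ⟨z, hzV, hzc⟩
    have hyz : y = z := by
      rw [hV, AffineSubspace.mem_coe, AffineSubspace.mem_mk'] at hyV
      have hy0 := (LinearMap.mem_ker.mp hyV)
      rw [hφ] at hy0
      have h1 : ∀ j : ↥(Fᶜ), (y -ᵥ z : EuclideanSpace ℝ (Fin d)) j.1 = 0 := by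
        intro j; exact congrFun (congrArg Prod.fst hy0) j
      have h2 : ∑ i ∈ F, σ i * ((y -ᵥ z : EuclideanSpace ℝ (Fin d)) i) = 0 :=
        congrArg Prod.snd hy0
      have hsubapp : ∀ i, (y -ᵥ z : EuclideanSpace ℝ (Fin d)) i = y i - z i := fun _ => rfl
      have hyc := hsub hyK
      have hterm : ∀ i ∈ F, 0 ≤ σ i * (y i - z i) := by
        intro i hi
        rw [hzF i hi]
        rcases hε i hi with h | h
        · have := (hyc i).1
          simp [hσdef, h]; linarith
        · have := (hyc i).2
          have hne : ε i ≠ 0 := by rw [h]; norm_num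
          simp [hσdef, hne, h]; linarith
      simp only [hsubapp] at h1 h2
      have hzero := (Finset.sum_eq_zero_iff_of_nonneg hterm).mp h2
      ext i
      by_cases hi : i ∈ F
      · have := hzero i hi
        have hσne : σ i ≠ 0 := by
          by_cases h : ε i = 0 <;> simp [hσdef, h]
        have : y i - z i = 0 := by
          rcases mul_eq_zero.mp this with h | h
          · exact absurd h hσne
          · exact h
        linarith
      · have := h1 ⟨i, by simpa using hi⟩
        linarith
    rwa [hyz] at hyK
  · intro z hz hz0
    ext x
    simp only [Set.mem_inter_iff, Set.mem_setOf_eq, Set.mem_singleton_iff]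
    constructor
    · rintro ⟨⟨h1, h2⟩, hxc⟩
      ext i
      by_cases hi : (i : ℕ) < d - k - 1
      · exact h1 i hi
      · have hnn : ∀ j ∈ Finset.univ.filter (fun j : Fin d => d - k - 1 ≤ (j : ℕ)),
            0 ≤ x j := fun j _ => (hxc j).1
        have hx0 := (Finset.sum_eq_zero_iff_of_nonneg hnn).mp h2 i (by simp; omega)
        rw [hx0, hz0 i (by omega)]
    · rintro rfl
      refine ⟨⟨fun i _ => rfl, Finset.sum_eq_zero fun i hi => hz0 i ?_⟩, hz⟩
      simpa using hi
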